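/- MWER satisfies menu-dependent Independence: for any menu M, acts f, g ∈ M, act h, and p ∈ (0,1), f ⪰_{M,P⁺} g if and only if pf + (1-p)h ⪰_{pM+(1-p)h, P⁺} pg + (1-p)h, where pM + (1-p)h = {pf' + (1-p)h : f' ∈ M}. -/

import Mathlib

open Finset Pointwise

def IsProb {S : Type*} [Fintype S] (p : S → ℝ) : Prop :=
  (∀ s, 0 ≤ p s) ∧ ∑ s, p s = 1

noncomputable def best {S : Type*} [Fintype S] (M : Set (S → ℝ)) (s : S) : ℝ :=
  sSup ((fun g => g s) '' M)

noncomputable def wreg {S : Type*} [Fintype S]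
    (P : Set ((S → ℝ) × ℝ)) (M : Set (S → ℝ)) (f : S → ℝ) : ℝ :=
  sSup {r | ∃ pa ∈ P, r = pa.2 * ∑ s, pa.1 s * (best M s - f s)}

lemma best_affine {S : Type*} [Fintype S] (M : Set (S → ℝ)) (hM : M.Nonempty)
    (hbdd : ∀ s, BddAbove ((fun g => g s) '' M))
    (h : S → ℝ) (p : ℝ) (hp0 : 0 < p) (s : S) :
    best ((fun f' => p • f' + (1-p) • h) '' M) s = p * best M s + (1-p) * h s := by
  have hmono : Monotone (fun x : ℝ => p * x + (1-p) * h s) := by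
    intro a b hab
    have := mul_le_mul_of_nonneg_left hab hp0.le
    dsimp only
    linarith
  have hcont : ContinuousAt (fun x : ℝ => p * x + (1-p) * h s)
      (sSup ((fun g => g s) '' M)) := by fun_prop
  have key := hmono.map_csSup_of_continuousAt hcont (hM.image _) (hbdd s)
  unfold best
  rw [key]
  congr 1
  ext x
  constructor
  · rintro ⟨f', ⟨f₀, hf₀, rfl⟩, rfl⟩
    exact ⟨f₀ s, ⟨f₀, hf₀, rfl⟩, by simp [Pi.add_apply]⟩
  · rintro ⟨y, ⟨f₀, hf₀, rfl⟩, rfl⟩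
    exact ⟨p • f₀ + (1-p) • h, ⟨f₀, hf₀, rfl⟩, by simp [Pi.add_apply]⟩

lemma wreg_affine {S : Type*} [Fintype S]
    (P : Set ((S → ℝ) × ℝ)) (M : Set (S → ℝ)) (hM : M.Nonempty)
    (hbdd : ∀ s, BddAbove ((fun g => g s) '' M))
    (f h : S → ℝ) (p : ℝ) (hp0 : 0 < p) :
    wreg P ((fun f' => p • f' + (1-p) • h) '' M) (p • f + (1-p) • h) = p * wreg P M f := by
  unfold wreg
  have hset : {r | ∃ pa ∈ P, r = pa.2 * ∑ s, pa.1 s *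
      (best ((fun f' => p • f' + (1-p) • h) '' M) s - (p • f + (1-p) • h) s)} =
      p • {r | ∃ pa ∈ P, r = pa.2 * ∑ s, pa.1 s * (best M s - f s)} := by
    ext r
    simp only [Set.mem_setOf_eq, Set.mem_smul_set, smul_eq_mul]
    constructor
    · rintro ⟨pa, hpa, rfl⟩
      refine ⟨pa.2 * ∑ s, pa.1 s * (best M s - f s), ⟨pa, hpa, rfl⟩, ?_⟩
      rw [Finset.mul_sum, Finset.mul_sum, Finset.mul_sum]
      congr 1
      ext s
      rw [best_affine M hM hbdd h p hp0 s]
      simp [Pi.add_apply]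
      ring
    · rintro ⟨x, ⟨pa, hpa, rfl⟩, rfl⟩
      refine ⟨pa, hpa, ?_⟩
      rw [Finset.mul_sum, Finset.mul_sum, Finset.mul_sum]
      congr 1
      ext s
      rw [best_affine M hM hbdd h p hp0 s]
      simp [Pi.add_apply]
      ring
  rw [hset, Real.sSup_smul_of_nonneg hp0.le, smul_eq_mul]

/-- MWER satisfies menu-dependent Independence: `f ⪰_{M,P⁺} g` iff
`pf + (1-p)h ⪰_{pM+(1-p)h, P⁺} pg + (1-p)h`. -/
theorem mwer_independence
    {S : Type*} [Fintype S]
    (P : Set ((S → ℝ) × ℝ))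
    (hP : ∀ pa ∈ P, IsProb pa.1 ∧ pa.2 ∈ Set.Icc (0:ℝ) 1)
    (M : Set (S → ℝ))
    (hbdd : ∀ s, BddAbove ((fun g => g s) '' M))
    (f g : S → ℝ) (hf : f ∈ M) (hg : g ∈ M)
    (h : S → ℝ) (p : ℝ) (hp : p ∈ Set.Ioo (0:ℝ) 1) :
    wreg P M f ≤ wreg P M g ↔
    wreg P ((fun f' => p • f' + (1-p) • h) '' M) (p • f + (1-p) • h) ≤
      wreg P ((fun f' => p • f' + (1-p) • h) '' M) (p • g + (1-p) • h) := by
  rw [wreg_affine P M ⟨f, hf⟩ hbdd f h p hp.1,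
      wreg_affine P M ⟨f, hf⟩ hbdd g h p hp.1]
  exact (mul_le_mul_iff_right₀ hp.1).symm
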